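/- Let x : V → ℝ^d, w : V → V → ℝ, and A : V → V → ℝ with A(i,i) = 0 for all i, and suppose x(l) ≠ x(i) whenever w(i,l)·A(i,l) ≠ 0, and that M_i(x) = Σ_{l ∈ V} ((x(l) − x(i))/‖x(l) − x(i)‖) ⊗ ((x(l) − x(i))/‖x(l) − x(i)‖) · w(i,l) · A(i,l) is invertible for every i. Define D(x)(i,j) = M_i(x)⁻¹ · ((x(j) − x(i))/‖x(j) − x(i)‖²) · w(i,j) · A(i,j), and define D̃(x)(i,j) = D(x)(i,j) − (if i = j then Σ_{l ∈ V} D(x)(i,l) else 0). Then D̃ is translation invariant and orthogonal-transformation equivariant: for every t ∈ ℝ^d and orthogonal d×d matrix U and all i,j ∈ V, D̃(fun v => U·x(v) + t)(i,j) = U · D̃(x)(i,j). -/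

import Mathlib

open Matrix

/-- Matrix–vector product, viewed as acting on Euclidean space. -/
def matVec {d : ℕ} (U : Matrix (Fin d) (Fin d) ℝ) (v : EuclideanSpace ℝ (Fin d)) :
    EuclideanSpace ℝ (Fin d) := WithLp.toLp 2 (U.mulVec v)

/-- Outer product of two vectors: the matrix with entries `v k * w m`. -/
def outer {d : ℕ} (v w : EuclideanSpace ℝ (Fin d)) : Matrix (Fin d) (Fin d) ℝ :=
  Matrix.of fun k m => v k * w m

/-- The matrix `M_i(x) = Σ_l ((x l − x i)/‖x l − x i‖) ⊗ ((x l − x i)/‖x l − x i‖) ⬝ w(i,l) ⬝ A(i,l)`. -/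
noncomputable def Mmat {V : Type*} [Fintype V] {d : ℕ}
    (w A : V → V → ℝ) (x : V → EuclideanSpace ℝ (Fin d)) (i : V) :
    Matrix (Fin d) (Fin d) ℝ :=
  ∑ l : V, (w i l * A i l) •
    outer (‖x l - x i‖⁻¹ • (x l - x i)) (‖x l - x i‖⁻¹ • (x l - x i))

/-- The IsoAM `D(x)(i,j) = M_i(x)⁻¹ ⬝ ((x j − x i)/‖x j − x i‖²) ⬝ w(i,j) ⬝ A(i,j)`. -/
noncomputable def Dvec {V : Type*} [Fintype V] {d : ℕ}
    (w A : V → V → ℝ) (x : V → EuclideanSpace ℝ (Fin d)) (i j : V) :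
    EuclideanSpace ℝ (Fin d) :=
  (w i j * A i j / ‖x j - x i‖ ^ 2) • matVec (Mmat w A x i)⁻¹ (x j - x i)

/-- The IsoAM `D̃(x)(i,j) = D(x)(i,j) − (if i = j then Σ_l D(x)(i,l) else 0)`. -/
noncomputable def Dtilde {V : Type*} [Fintype V] [DecidableEq V] {d : ℕ}
    (w A : V → V → ℝ) (x : V → EuclideanSpace ℝ (Fin d)) (i j : V) :
    EuclideanSpace ℝ (Fin d) :=
  Dvec w A x i j - (if i = j then ∑ l : V, Dvec w A x i l else 0)

section Aux

variable {d : ℕ}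

lemma matVec_smul (U : Matrix (Fin d) (Fin d) ℝ) (c : ℝ) (v : EuclideanSpace ℝ (Fin d)) :
    matVec U (c • v) = c • matVec U v := by
  ext k
  simp [matVec, Matrix.mulVec, dotProduct, Finset.mul_sum]
  exact Finset.sum_congr rfl fun p _ => by ring

lemma matVec_sub (U : Matrix (Fin d) (Fin d) ℝ) (v w : EuclideanSpace ℝ (Fin d)) :
    matVec U (v - w) = matVec U v - matVec U w := by
  ext k
  simp [matVec, Matrix.mulVec, dotProduct, mul_sub, Finset.sum_sub_distrib]

lemma matVec_zero (U : Matrix (Fin d) (Fin d) ℝ) : matVec U (0 : EuclideanSpace ℝ (Fin d)) = 0 := by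
  simp [matVec]

lemma matVec_sum {V : Type*} [Fintype V] (U : Matrix (Fin d) (Fin d) ℝ)
    (f : V → EuclideanSpace ℝ (Fin d)) :
    matVec U (∑ l : V, f l) = ∑ l : V, matVec U (f l) :=
  by ext k; simp [matVec, Matrix.mulVec, dotProduct, Finset.mul_sum, Finset.sum_apply]; exact Finset.sum_comm

lemma matVec_mul (A B : Matrix (Fin d) (Fin d) ℝ) (v : EuclideanSpace ℝ (Fin d)) :
    matVec (A * B) v = matVec A (matVec B v) := by
  simp [matVec, Matrix.mulVec_mulVec]

lemma matVec_one (v : EuclideanSpace ℝ (Fin d)) : matVec (1 : Matrix (Fin d) (Fin d) ℝ) v = v := by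
  simp [matVec]

lemma orth_tmul (U : Matrix.orthogonalGroup (Fin d) ℝ) :
    (U : Matrix (Fin d) (Fin d) ℝ)ᵀ * U = 1 := by
  simpa [Matrix.star_eq_conjTranspose] using U.2.1

lemma orth_mult (U : Matrix.orthogonalGroup (Fin d) ℝ) :
    (U : Matrix (Fin d) (Fin d) ℝ) * (U : Matrix (Fin d) (Fin d) ℝ)ᵀ = 1 := by
  simpa [Matrix.star_eq_conjTranspose] using U.2.2

lemma matVec_norm (U : Matrix.orthogonalGroup (Fin d) ℝ) (v : EuclideanSpace ℝ (Fin d)) :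
    ‖matVec (U : Matrix (Fin d) (Fin d) ℝ) v‖ = ‖v‖ := by
  have key : ∀ y : EuclideanSpace ℝ (Fin d), ‖y‖ ^ 2 = (y : Fin d → ℝ) ⬝ᵥ (y : Fin d → ℝ) := by
    intro y
    rw [← real_inner_self_eq_norm_sq]
    simp [dotProduct, PiLp.inner_apply]
    rw [EuclideanSpace.norm_sq_eq]
    exact Finset.sum_congr rfl fun i _ => by rw [Real.norm_eq_abs, sq_abs, sq]
  have h2 : ‖matVec (U : Matrix (Fin d) (Fin d) ℝ) v‖ ^ 2 = ‖v‖ ^ 2 := by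
    rw [key, key]
    show ((U : Matrix (Fin d) (Fin d) ℝ).mulVec v) ⬝ᵥ ((U : Matrix (Fin d) (Fin d) ℝ).mulVec v)
        = v ⬝ᵥ v
    rw [dotProduct_mulVec, ← Matrix.vecMul_transpose, Matrix.vecMul_vecMul, orth_tmul,
      Matrix.vecMul_one]
  nlinarith [norm_nonneg (matVec (U : Matrix (Fin d) (Fin d) ℝ) v), norm_nonneg v]

lemma outer_matVec (U : Matrix (Fin d) (Fin d) ℝ) (a b : EuclideanSpace ℝ (Fin d)) :
    outer (matVec U a) (matVec U b) = U * outer a b * Uᵀ := by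
  ext k m
  simp only [outer, matVec, Matrix.mul_apply, Matrix.of_apply, Matrix.mulVec, dotProduct,
    Matrix.transpose_apply, Finset.sum_mul, Finset.mul_sum]
  apply Finset.sum_congr rfl; intro p _
  apply Finset.sum_congr rfl; intro q _
  ring

end Aux

/-- The IsoAM `D̃` is translation invariant and orthogonal-transformation
equivariant: `D̃(U∘x + t)(i,j) = U ⬝ D̃(x)(i,j)`. -/
theorem Dtilde_isometric_equivariant
    {V : Type*} [Fintype V] [DecidableEq V] {d : ℕ}
    (x : V → EuclideanSpace ℝ (Fin d))
    (w A : V → V → ℝ)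
    (hA : ∀ i, A i i = 0)
    (hne : ∀ i l, w i l * A i l ≠ 0 → x l ≠ x i)
    (hInv : ∀ i, IsUnit (Mmat w A x i))
    (U : Matrix.orthogonalGroup (Fin d) ℝ) (t : EuclideanSpace ℝ (Fin d)) (i j : V) :
    Dtilde w A (fun v => matVec (U : Matrix (Fin d) (Fin d) ℝ) (x v) + t) i j
      = matVec (U : Matrix (Fin d) (Fin d) ℝ) (Dtilde w A x i j) := by
  set U' : Matrix (Fin d) (Fin d) ℝ := (U : Matrix (Fin d) (Fin d) ℝ) with hU'
  set y : V → EuclideanSpace ℝ (Fin d) := fun v => matVec U' (x v) + t with hy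
  have h1 : ∀ a b : V, y a - y b = matVec U' (x a - x b) := by
    intro a b
    simp only [hy, matVec_sub]
    abel
  have hnorm : ∀ a b : V, ‖y a - y b‖ = ‖x a - x b‖ := by
    intro a b; rw [h1]; exact matVec_norm U _
  have hM : ∀ i, Mmat w A y i = U' * Mmat w A x i * U'ᵀ := by
    intro i
    unfold Mmat
    rw [Matrix.mul_sum, Matrix.sum_mul]
    apply Finset.sum_congr rfl; intro l _
    rw [hnorm, h1, ← matVec_smul, outer_matVec]
    simp [Matrix.mul_smul, Matrix.smul_mul]
  have hMinv : ∀ i, (Mmat w A y i)⁻¹ = U' * (Mmat w A x i)⁻¹ * U'ᵀ := by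
    intro i
    have hUinv : U'⁻¹ = U'ᵀ := Matrix.inv_eq_right_inv (orth_mult U)
    have hUtinv : (U'ᵀ)⁻¹ = U' := Matrix.inv_eq_right_inv (orth_tmul U)
    rw [hM, Matrix.mul_inv_rev, Matrix.mul_inv_rev, hUinv, hUtinv, mul_assoc]
  have hD : ∀ i j, Dvec w A y i j = matVec U' (Dvec w A x i j) := by
    intro i j
    unfold Dvec
    rw [hnorm, h1, hMinv, matVec_smul]
    congr 1
    rw [mul_assoc, matVec_mul, matVec_mul, ← matVec_mul U'ᵀ U', orth_tmul, matVec_one]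
  unfold Dtilde
  rw [matVec_sub, hD]
  congr 1
  by_cases h : i = j
  · simp only [h, if_true, matVec_sum]
    exact Finset.sum_congr rfl fun l _ => hD j l
  · simp [h, matVec_zero]
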